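/- Let ν be the law of a doubly-infinite sequence (Z_i)_{i∈ℤ} in a countable group H given by a two-sided random walk with i.i.d. symmetric increments with step distribution μ (Z_0 = o, Z_{n+1} = Z_n ξ_{n+1} with ξ i.i.d. ~ μ and μ(g) = μ(g⁻¹)). Then the time-shift S((z_i)_i) = (z_{i+1})_i preserves the measure ν on the σ-algebra of events invariant under simultaneous left-translation of the whole trajectory by elements of H. -/

import Mathlib

open MeasureTheory

/-- The time shift on doubly-infinite trajectories. -/
def timeShift {H : Type*} (z : ℤ → H) : ℤ → H := fun i => z (i + 1)

section Aux

variable {H : Type*} [Group H] [Countable H]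
  [MeasurableSpace H] [MeasurableSingletonClass H]

/-- The increment map of a trajectory. -/
def incMap (z : ℤ → H) : ℤ → H := fun i => (z i)⁻¹ * z (i + 1)

lemma measurable_timeShift : Measurable (timeShift (H := H)) :=
  measurable_pi_iff.2 fun i => measurable_pi_apply (i + 1)

lemma measurable_incMap : Measurable (incMap (H := H)) := by
  refine measurable_pi_iff.2 fun i => ?_
  show Measurable fun z : ℤ → H => (z i)⁻¹ * z (i + 1)
  have hp : Measurable fun z : ℤ → H => (z i, z (i + 1)) :=
    (measurable_pi_apply i).prodMk (measurable_pi_apply (i + 1))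
  have hd : Measurable (fun p : H × H => p.1⁻¹ * p.2) := Measurable.of_discrete
  exact hd.comp hp

/-- Forward reconstruction of a trajectory from increments. -/
def fwd (b : ℤ → H) : ℕ → H
  | 0 => 1
  | (k + 1) => fwd b k * b k

/-- Backward reconstruction of a trajectory from increments. -/
def bwd (b : ℤ → H) : ℕ → H
  | 0 => 1
  | (k + 1) => bwd b k * (b (-((k : ℤ) + 1)))⁻¹

/-- Reconstruction of the trajectory started at `1` with increment sequence `b`. -/
def recTraj (b : ℤ → H) : ℤ → H := fun i =>
  match i with
  | Int.ofNat n => fwd b n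
  | Int.negSucc n => bwd b (n + 1)

lemma measurable_fwd (k : ℕ) : Measurable (fun b : ℤ → H => fwd b k) := by
  induction k with
  | zero => simpa [fwd] using measurable_const
  | succ k ih =>
    have : (fun b : ℤ → H => fwd b (k + 1)) = fun b => fwd b k * b k := rfl
    rw [this]
    have hd : Measurable (fun p : H × H => p.1 * p.2) := Measurable.of_discrete
    exact hd.comp (ih.prodMk (measurable_pi_apply _))

lemma measurable_bwd (k : ℕ) : Measurable (fun b : ℤ → H => bwd b k) := by
  induction k with
  | zero => simpa [bwd] using measurable_const
  | succ k ih =>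
    have : (fun b : ℤ → H => bwd b (k + 1))
        = fun b => bwd b k * (b (-((k : ℤ) + 1)))⁻¹ := rfl
    rw [this]
    have hd : Measurable (fun p : H × H => p.1 * p.2⁻¹) := Measurable.of_discrete
    exact hd.comp (ih.prodMk (measurable_pi_apply _))

lemma measurable_recTraj : Measurable (recTraj (H := H)) := by
  refine measurable_pi_iff.2 fun i => ?_
  cases i with
  | ofNat n => exact measurable_fwd n
  | negSucc n => exact measurable_bwd (n + 1)

lemma fwd_incMap (z : ℤ → H) : ∀ n : ℕ, fwd (incMap z) n = (z 0)⁻¹ * z n := by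
  intro n
  induction n with
  | zero => simp [fwd]
  | succ n ih =>
    have : fwd (incMap z) (n + 1) = fwd (incMap z) n * incMap z n := rfl
    rw [this, ih, incMap]
    push_cast
    group

lemma bwd_incMap (z : ℤ → H) : ∀ k : ℕ, bwd (incMap z) k = (z 0)⁻¹ * z (-(k : ℤ)) := by
  intro k
  induction k with
  | zero => simp [bwd]
  | succ k ih =>
    have : bwd (incMap z) (k + 1)
        = bwd (incMap z) k * (incMap z (-((k : ℤ) + 1)))⁻¹ := rfl
    rw [this, ih, incMap]
    have h1 : -((k : ℤ) + 1) + 1 = -(k : ℤ) := by ring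
    rw [h1]
    push_cast
    group

lemma recTraj_incMap (z : ℤ → H) : recTraj (incMap z) = fun i => (z 0)⁻¹ * z i := by
  funext i
  cases i with
  | ofNat n =>
    show fwd (incMap z) n = (z 0)⁻¹ * z (Int.ofNat n)
    simpa using fwd_incMap z n
  | negSucc n =>
    show bwd (incMap z) (n + 1) = (z 0)⁻¹ * z (Int.negSucc n)
    rw [bwd_incMap z (n + 1)]
    congr 1

lemma incMap_recTraj (b : ℤ → H) : incMap (recTraj b) = b := by
  funext i
  cases i with
  | ofNat n =>
    show (recTraj b (Int.ofNat n))⁻¹ * recTraj b ((Int.ofNat n) + 1) = b (Int.ofNat n)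
    have h1 : (Int.ofNat n) + 1 = Int.ofNat (n + 1) := rfl
    rw [h1]
    show (fwd b n)⁻¹ * fwd b (n + 1) = b (Int.ofNat n)
    have h2 : fwd b (n + 1) = fwd b n * b n := rfl
    rw [h2]
    group
    simp
  | negSucc n =>
    cases n with
    | zero =>
      show (recTraj b (Int.negSucc 0))⁻¹ * recTraj b ((Int.negSucc 0) + 1) = b (Int.negSucc 0)
      have h1 : (Int.negSucc 0) + 1 = Int.ofNat 0 := by decide
      rw [h1]
      show (bwd b 1)⁻¹ * fwd b 0 = b (Int.negSucc 0)
      have h2 : bwd b 1 = bwd b 0 * (b (-((0 : ℤ) + 1)))⁻¹ := rfl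
      rw [h2]
      have h3 : (-((0 : ℤ) + 1)) = Int.negSucc 0 := by decide
      rw [h3]
      simp [bwd, fwd]
    | succ m =>
      show (recTraj b (Int.negSucc (m + 1)))⁻¹ * recTraj b ((Int.negSucc (m + 1)) + 1)
          = b (Int.negSucc (m + 1))
      have h1 : (Int.negSucc (m + 1)) + 1 = Int.negSucc m := rfl
      rw [h1]
      show (bwd b (m + 2))⁻¹ * bwd b (m + 1) = b (Int.negSucc (m + 1))
      have h2 : bwd b (m + 2) = bwd b (m + 1) * (b (-(((m + 1 : ℕ) : ℤ) + 1)))⁻¹ := rfl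
      have h3 : (-(((m + 1 : ℕ) : ℤ) + 1)) = Int.negSucc (m + 1) := by
        rw [Int.negSucc_eq]
      rw [h2, h3]
      group

end Aux

/-- Let `ν` be the law of a doubly-infinite random walk on a countable group `H` started
at the identity, with i.i.d. symmetric increments of step distribution `μ` (characterized
by its cylinder probabilities). Then the time shift preserves `ν` on the σ-algebra of
events invariant under simultaneous left translation of the trajectory by elements
of `H`. -/
theorem shift_invariant_on_translation_invariant_events
    {H : Type*} [Group H] [Countable H] [DecidableEq H]
    [MeasurableSpace H] [MeasurableSingletonClass H]
    (μ : H → ENNReal) (hμ : ∑' g, μ g = 1) (hsymm : ∀ g : H, μ g = μ g⁻¹)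
    (hsupp : Subgroup.closure {g : H | μ g ≠ 0} = ⊤)
    (ν : Measure (ℤ → H)) [IsProbabilityMeasure ν]
    (hstart : ν {z | z 0 = 1} = 1)
    (hcyl : ∀ (F : Finset ℤ) (b : ℤ → H),
      ν {z | ∀ i ∈ F, (z i)⁻¹ * z (i + 1) = b i} = ∏ i ∈ F, μ (b i))
    (A : Set (ℤ → H)) (hA : MeasurableSet A)
    (hinv : ∀ h : H, (fun z : ℤ → H => fun i => h * z i) ⁻¹' A = A) :
    ν (timeShift ⁻¹' A) = ν A := by
  classical
  have hm1 : Measurable (incMap (H := H)) := measurable_incMap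
  have hm2 : Measurable (timeShift ∘ incMap (H := H)) :=
    measurable_timeShift.comp hm1
  -- the set of increments whose reconstructed trajectory lies in A
  set B : Set (ℤ → H) := recTraj ⁻¹' A with hBdef
  have hB : MeasurableSet B := measurable_recTraj hA
  have hAB : incMap ⁻¹' B = A := by
    ext z
    simp only [Set.mem_preimage, hBdef]
    rw [recTraj_incMap]
    have := Set.ext_iff.1 (hinv (z 0)⁻¹) z
    simpa using this
  -- measurability of point cylinder sets
  have hptMeas : ∀ (F : Finset ℤ) (b : ℤ → H),
      MeasurableSet {z : ℤ → H | ∀ i ∈ F, z i = b i} := by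
    intro F b
    have : {z : ℤ → H | ∀ i ∈ F, z i = b i}
        = ⋂ i ∈ F, (fun z : ℤ → H => z i) ⁻¹' {b i} := by
      ext z; simp
    rw [this]
    exact MeasurableSet.biInter F.countable_toSet
      (fun i _ => measurable_pi_apply i (measurableSet_singleton _))
  -- the two pushforward laws of increments agree
  have key : ν.map incMap = ν.map (timeShift ∘ incMap) := by
    haveI : IsProbabilityMeasure (ν.map (incMap (H := H))) :=
      Measure.isProbabilityMeasure_map hm1.aemeasurable
    haveI : IsProbabilityMeasure (ν.map (timeShift ∘ incMap (H := H))) :=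
      Measure.isProbabilityMeasure_map hm2.aemeasurable
    -- equality on point cylinders
    have point_eq : ∀ (F : Finset ℤ) (b : ℤ → H),
        ν.map incMap {z : ℤ → H | ∀ i ∈ F, z i = b i}
          = ν.map (timeShift ∘ incMap) {z : ℤ → H | ∀ i ∈ F, z i = b i} := by
      intro F b
      rw [Measure.map_apply hm1 (hptMeas F b), Measure.map_apply hm2 (hptMeas F b)]
      have hL : incMap ⁻¹' {z : ℤ → H | ∀ i ∈ F, z i = b i}
          = {z : ℤ → H | ∀ i ∈ F, (z i)⁻¹ * z (i + 1) = b i} := rfl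
      have hR : (timeShift ∘ incMap) ⁻¹' {z : ℤ → H | ∀ i ∈ F, z i = b i}
          = {z : ℤ → H | ∀ j ∈ F.image (· + 1), (z j)⁻¹ * z (j + 1) = b (j - 1)} := by
        ext z
        simp only [Set.mem_preimage, Set.mem_setOf_eq, Function.comp_apply,
          timeShift, incMap, Finset.mem_image]
        constructor
        · rintro h j ⟨i, hi, rfl⟩
          simpa using h i hi
        · intro h i hi
          simpa using h (i + 1) ⟨i, hi, rfl⟩
      rw [hL, hR, hcyl F b, hcyl (F.image (· + 1)) (fun j => b (j - 1))]
      rw [Finset.prod_image (by intro x _ y _ h; exact add_right_cancel h)]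
      simp
    refine ext_of_generate_finite (measurableCylinders fun _ : ℤ => H)
      generateFrom_measurableCylinders.symm isPiSystem_measurableCylinders ?_ (by simp)
    intro t ht
    obtain ⟨s, S, hS, rfl⟩ := (mem_measurableCylinders t).1 ht
    -- decompose the cylinder into point cylinders
    have hdecomp : cylinder s S = ⋃ g : S, cylinder (α := fun _ : ℤ => H) s {g.1} := by
      ext f
      simp only [mem_cylinder, Set.mem_iUnion, Set.mem_singleton_iff]
      constructor
      · intro h; exact ⟨⟨_, h⟩, rfl⟩
      · rintro ⟨g, hg⟩; rw [hg]; exact g.2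
    have hsingMeas : ∀ g : ∀ i : s, H, MeasurableSet ({g} : Set (∀ i : s, H)) := by
      intro g
      have : ({g} : Set (∀ i : s, H)) = Set.univ.pi (fun i => {g i}) := by
        ext f; simp [funext_iff]
      rw [this]
      exact MeasurableSet.pi (Set.to_countable _)
        (fun i _ => measurableSet_singleton _)
    have hcylMeas : ∀ g : ∀ i : s, H, MeasurableSet (cylinder (α := fun _ : ℤ => H) s {g}) :=
      fun g => (hsingMeas g).cylinder
    have hdisj : Pairwise (Function.onFun Disjoint
        fun g : S => cylinder (α := fun _ : ℤ => H) s {g.1}) := by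
      intro g₁ g₂ hne
      refine Set.disjoint_left.2 fun f hf₁ hf₂ => ?_
      simp only [mem_cylinder, Set.mem_singleton_iff] at hf₁ hf₂
      exact hne (Subtype.ext (hf₁ ▸ hf₂))
    have hpt : ∀ g : ∀ i : s, H,
        ν.map incMap (cylinder (α := fun _ : ℤ => H) s {g})
          = ν.map (timeShift ∘ incMap) (cylinder (α := fun _ : ℤ => H) s {g}) := by
      intro g
      set b : ℤ → H := fun i => if h : i ∈ s then g ⟨i, h⟩ else 1 with hbdef
      have hform : cylinder (α := fun _ : ℤ => H) s {g}
          = {z : ℤ → H | ∀ i ∈ s, z i = b i} := by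
        ext z
        simp only [mem_cylinder, Set.mem_singleton_iff, Set.mem_setOf_eq, funext_iff,
          Finset.restrict]
        constructor
        · intro h i hi
          simp only [hbdef, dif_pos hi]
          exact h ⟨i, hi⟩
        · intro h i
          have := h i.1 i.2
          simpa only [hbdef, dif_pos i.2] using this
      rw [hform]
      exact point_eq s b
    rw [hdecomp, measure_iUnion hdisj (fun g => hcylMeas _),
      measure_iUnion hdisj (fun g => hcylMeas _)]
    exact tsum_congr fun g => hpt _
  -- conclude
  have hcomm : (incMap (H := H)) ∘ timeShift = timeShift ∘ incMap := by
    funext z; funext i; rfl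
  have h1 : timeShift ⁻¹' A = (timeShift ∘ incMap) ⁻¹' B := by
    rw [← hAB, ← Set.preimage_comp, hcomm, Set.preimage_comp]
  calc ν (timeShift ⁻¹' A) = ν ((timeShift ∘ incMap) ⁻¹' B) := by rw [h1]
    _ = ν.map (timeShift ∘ incMap) B := (Measure.map_apply hm2 hB).symm
    _ = ν.map incMap B := by rw [key]
    _ = ν (incMap ⁻¹' B) := Measure.map_apply hm1 hB
    _ = ν A := by rw [hAB]
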